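/- Let (x,z) be a feasible solution to Forest-BCR, let v be a terminal, i.e., v ∈ P for some P ∈ 𝒫, and suppose there exist a vertex r ∈ V with r ≠ v and a directed edge (u,v) entering v with x^r_{(u,v)} > 0. Then ∑_{r'∈V} ( ∑_{e∈δ⁺({v})} x^{r'}_e + ∑_{e∈δ⁻({v})} x^{r'}_e ) > 1. -/
import Mathlib


open Finset

noncomputable section

variable {V : Type*}

/-- The set of terminals: vertices occurring in some pair of `P`. -/
def terminals [Fintype V] [DecidableEq V] (P : Finset (Finset V)) : Finset V :=
  Finset.univ.filter fun v => ∃ p ∈ P, v ∈ p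

/-- Feasibility for the Forest-BCR linear program: `x r u v` is the value of the
variable `x^r_{(u,v)}` and `z r p` is the value of `z^r_P`. -/
def ForestBCRFeasible [Fintype V] [DecidableEq V] (P : Finset (Finset V))
    (x : V → V → V → ℝ) (z : V → Finset V → ℝ) : Prop :=
  (∀ r u v : V, u ≠ v → 0 ≤ x r u v) ∧
  (∀ r : V, ∀ p ∈ P, 0 ≤ z r p) ∧
  (∀ p ∈ P, ∑ r : V, z r p = 1) ∧
  (∀ r : V, ∀ p ∈ P, ∀ U : Finset V, r ∉ U → (p ∩ U).Nonempty →
    z r p ≤ ∑ u ∈ U, ∑ v ∈ Uᶜ, x r u v)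

/-- The cost `c(x)` of a Forest-BCR solution. -/
def bcrCost [Fintype V] [DecidableEq V] (c : V → V → ℝ) (x : V → V → V → ℝ) : ℝ :=
  ∑ r : V, ∑ u : V, ∑ v ∈ Finset.univ.erase u, c u v * x r u v

/-- Half-integrality of a Forest-BCR solution. -/
def HalfIntegralSol [Fintype V] [DecidableEq V] (P : Finset (Finset V))
    (x : V → V → V → ℝ) (z : V → Finset V → ℝ) : Prop :=
  (∀ r u v : V, u ≠ v → ∃ n : ℤ, x r u v = n / 2) ∧
  (∀ r : V, ∀ p ∈ P, ∃ n : ℤ, z r p = n / 2)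

/-- The solution `x` is supported on the graph `G`. -/
def SupportedOn (G : SimpleGraph V) (x : V → V → V → ℝ) : Prop :=
  ∀ r u v : V, u ≠ v → ¬ G.Adj u v → x r u v = 0

/-- In a feasible Forest-BCR solution, if a terminal `v` has an
entering edge with positive `x^r`-value for some root `r ≠ v`, then the total
`x`-value of edges incident to `v` exceeds `1`. -/
theorem terminal_with_foreign_incoming_is_high_degree [Fintype V] [DecidableEq V]
    (P : Finset (Finset V)) (hP : ∀ p ∈ P, p.card = 2)
    (x : V → V → V → ℝ) (z : V → Finset V → ℝ)
    (hfeas : ForestBCRFeasible P x z)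
    (v : V) (hv : ∃ p ∈ P, v ∈ p)
    (r u : V) (hr : r ≠ v) (hu : u ≠ v) (hxpos : 0 < x r u v) :
    1 < ∑ r' : V, ((∑ w ∈ Finset.univ.erase v, x r' v w) +
      ∑ w ∈ Finset.univ.erase v, x r' w v) := by
  obtain ⟨p, hp, hvp⟩ := hv
  obtain ⟨hx, hz0, hzsum, hcut⟩ := hfeas
  -- shorthand for out- and in-degree at v
  set f : V → ℝ := fun r' => (∑ w ∈ Finset.univ.erase v, x r' v w) +
      ∑ w ∈ Finset.univ.erase v, x r' w v with hf
  have hout_nonneg : ∀ r', 0 ≤ ∑ w ∈ Finset.univ.erase v, x r' v w := by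
    intro r'
    refine Finset.sum_nonneg fun w hw => hx r' v w ?_
    exact fun h => (Finset.mem_erase.mp hw).1 h.symm
  have hin_nonneg : ∀ r', 0 ≤ ∑ w ∈ Finset.univ.erase v, x r' w v := by
    intro r'
    exact Finset.sum_nonneg fun w hw => hx r' w v (Finset.mem_erase.mp hw).1
  -- for roots r' ≠ v, cut U = {v} bounds z r' p by the out-degree
  have h1 : ∀ r', r' ≠ v → z r' p ≤ ∑ w ∈ Finset.univ.erase v, x r' v w := by
    intro r' hr'
    have := hcut r' p hp {v} (by simp [hr']) ⟨v, by simp [hvp]⟩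
    simpa [Finset.compl_singleton] using this
  -- for root v, cut U = univ.erase v bounds z v p by the in-degree
  have h2 : z v p ≤ ∑ w ∈ Finset.univ.erase v, x v w v := by
    obtain ⟨w', hw'⟩ : (p.erase v).Nonempty := by
      rw [← Finset.card_pos, Finset.card_erase_of_mem hvp, hP p hp]
      norm_num
    have hw1 : w' ≠ v := (Finset.mem_erase.mp hw').1
    have hw2 : w' ∈ p := (Finset.mem_erase.mp hw').2
    have := hcut v p hp (Finset.univ.erase v) (by simp)
      ⟨w', Finset.mem_inter.mpr ⟨hw2, Finset.mem_erase.mpr ⟨hw1, Finset.mem_univ _⟩⟩⟩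
    have hc : (Finset.univ.erase v)ᶜ = ({v} : Finset V) := by
      ext a; simp [Finset.mem_compl]
    simpa [hc] using this
  -- the positive edge gives strict slack in the in-degree at root r
  have h3 : x r u v ≤ ∑ w ∈ Finset.univ.erase v, x r w v := by
    refine Finset.single_le_sum (fun w hw => hx r w v (Finset.mem_erase.mp hw).1) ?_
    exact Finset.mem_erase.mpr ⟨hu, Finset.mem_univ _⟩
  have hle : ∀ r', z r' p + (if r' = r then x r u v else 0) ≤ f r' := by
    intro r'
    by_cases hrv : r' = v
    · subst hrv
      have : r' ≠ r := fun h => hr (h ▸ rfl)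
      simp only [if_neg this, add_zero, hf]
      calc z r' p ≤ ∑ w ∈ Finset.univ.erase r', x r' w r' := h2
        _ ≤ _ := le_add_of_nonneg_left (hout_nonneg r')
    · by_cases hrr : r' = r
      · subst hrr
        simp only [if_pos rfl, hf]
        exact add_le_add (h1 r' hrv) h3
      · simp only [if_neg hrr, add_zero, hf]
        calc z r' p ≤ ∑ w ∈ Finset.univ.erase v, x r' v w := h1 r' hrv
          _ ≤ _ := le_add_of_nonneg_right (hin_nonneg r')
  have hsum : ∑ r' : V, (z r' p + (if r' = r then x r u v else 0)) ≤ ∑ r' : V, f r' :=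
    Finset.sum_le_sum fun r' _ => hle r'
  rw [Finset.sum_add_distrib, hzsum p hp, Finset.sum_ite_eq' Finset.univ r
    (fun _ => x r u v), if_pos (Finset.mem_univ r)] at hsum
  calc (1:ℝ) < 1 + x r u v := by linarith
    _ ≤ _ := hsum
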